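/- Let d ≥ 4 be an even integer and let z₂, …, z_d ∈ ℂ with |z_j| = 1 for all j. Then P_d(z₂,…,z_d) = D* · P_d(−1, 1, −1, …, −1) · D, where D is the diagonal matrix with j-th diagonal entry (−1)^{j−1} z_j (with z₁ = 1), i.e. D = Diag(1, −z₂, z₃, −z₄, …, z_{d−1}, −z_d), D* is its conjugate transpose, and P_d(−1,1,…,−1) means P_d evaluated at z_j = (−1)^{j−1}. -/

import Mathlib

open Matrix

/-- The matrix `P_d(z₂,…,z_d)` (with `z₁ = 1` supplied through the function `z`),
indexed by `Fin d`, where position `j : Fin d` corresponds to the 1-based index `j.val + 1`. -/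
noncomputable def Pmat (d : ℕ) (z : ℕ → ℂ) : Matrix (Fin d) (Fin d) ℂ :=
  Matrix.of fun j k =>
    let a := j.val + 1
    let b := k.val + 1
    if a = b then 2
    else if b = a + 1 then z b * (z a)⁻¹
    else if a = b + 1 then z b * (z a)⁻¹
    else if a = 1 ∧ b = d then z d
    else if a = d ∧ b = 1 then (z d)⁻¹
    else 0

theorem stmt4 (d : ℕ) (hd : 4 ≤ d) (hde : Even d) (z : ℕ → ℂ)
    (hz1 : z 1 = 1) (hz : ∀ j, 2 ≤ j → j ≤ d → ‖z j‖ = 1) :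
    Pmat d z =
      (Matrix.diagonal (fun j : Fin d => (-1 : ℂ) ^ j.val * z (j.val + 1)))ᴴ
        * Pmat d (fun j => (-1 : ℂ) ^ (j - 1))
        * Matrix.diagonal (fun j : Fin d => (-1 : ℂ) ^ j.val * z (j.val + 1)) := by
  have habs : ∀ n, 1 ≤ n → n ≤ d → ‖z n‖ = 1 := by
    intro n h1 h2
    rcases Nat.lt_or_ge n 2 with h | h
    · interval_cases n; simp [hz1]
    · exact hz n h h2
  have hconj : ∀ n, 1 ≤ n → n ≤ d → starRingEnd ℂ (z n) = (z n)⁻¹ := by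
    intro n h1 h2
    exact (Complex.inv_eq_conj (habs n h1 h2)).symm
  have hne : ∀ n, 1 ≤ n → n ≤ d → z n ≠ 0 := by
    intro n h1 h2
    intro h0
    have := habs n h1 h2
    rw [h0] at this; simp at this
  have hdm1 : (-1 : ℂ) ^ (d - 1) = -1 := by
    obtain ⟨m, hm⟩ := hde
    have : d - 1 = 2 * m - 1 := by omega
    rw [this]
    have hm1 : 1 ≤ m := by omega
    have : 2 * m - 1 = 2 * (m - 1) + 1 := by omega
    rw [this, pow_succ, pow_mul]
    simp
  ext j k
  rw [Matrix.diagonal_conjTranspose, Matrix.mul_diagonal, Matrix.diagonal_mul]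
  simp only [Pmat, Matrix.of_apply, Pi.star_apply]
  have hj : j.val < d := j.isLt
  have hk : k.val < d := k.isLt
  have hinv : ∀ n : ℕ, ((-1:ℂ)^n)⁻¹ = (-1)^n := by
    intro n; rw [← inv_pow, inv_neg_one]
  have hsq : ∀ n : ℕ, ((-1:ℂ)^n) * (-1)^n = 1 := by
    intro n; rw [← pow_add]; exact Even.neg_one_pow ⟨n, rfl⟩
  simp only [star_mul', star_pow, star_neg, star_one, Complex.star_def]
  split_ifs with h1 h2 h3 h4 h5 <;> try omega
  · -- diagonal
    have hkj : (k:ℕ) = j := by omega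
    rw [hkj, hconj (j.val+1) (by omega) (by omega)]
    field_simp [hne (j.val+1) (by omega) (by omega)]
    ring_nf
    simp [pow_mul', show ((-1:ℂ)^3) = -1 from by norm_num]
  · -- k = j+1
    have hkj : (k:ℕ) = j.val + 1 := by omega
    rw [hkj, hconj (j.val+1) (by omega) (by omega)]
    field_simp [hne (j.val+1) (by omega) (by omega)]
    ring_nf
    simp [pow_mul', show ((-1:ℂ)^3) = -1 from by norm_num]
    rw [show 2 + (j:ℕ) - 1 = (j:ℕ) + 1 from by omega, pow_succ]; ring
  · -- j = k+1
    have hjk : (j:ℕ) = k.val + 1 := by omega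
    rw [hjk, hconj (k.val+2) (by omega) (by omega)]
    field_simp [hne (k.val+2) (by omega) (by omega)]
    ring_nf
    simp [pow_mul', show ((-1:ℂ)^3) = -1 from by norm_num]
    rw [show 2 + (k:ℕ) - 1 = (k:ℕ) + 1 from by omega, pow_succ]; ring
  · -- corner
    obtain ⟨hj0, hk0⟩ := h4
    have hj0' : (j:ℕ) = 0 := by omega
    have hk0' : (k:ℕ) = d - 1 := by omega
    rw [hj0', hk0', show d-1+1 = d from by omega, hz1, hdm1]
    simp [hdm1]
  · -- corner 2
    obtain ⟨hjd, hk1⟩ := h5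
    have hjd' : (j:ℕ) = d - 1 := by omega
    have hk0' : (k:ℕ) = 0 := by omega
    rw [hjd', hk0', show d-1+1 = d from by omega, hz1, hdm1,
      hconj d (by omega) (by omega)]
    simp [hdm1, inv_neg]
  · simp
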